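/- If F is a friend of 10 and F is a perfect square (i.e., the exponent of every prime in its factorization is even), then 729·F > 625·9^(ω(F)), where ω(F) denotes the number of distinct prime divisors of F; equivalently, F > 625·9^(ω(F)−3). -/

import Mathlib

/-- `F` is a friend of `10`: a positive integer, different from `10`, with the same
abundancy index as `10`, i.e. `σ(F)/F = 9/5`, equivalently `5·σ(F) = 9·F`. -/
def FriendOf10 (F : ℕ) : Prop :=
  0 < F ∧ F ≠ 10 ∧ 5 * ArithmeticFunction.sigma 1 F = 9 * F

lemma odd_geom_aux (p : ℕ) : ∀ b : ℕ, Odd (∑ k ∈ Finset.range (2 * b + 1), p ^ k) := by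
  intro b
  induction b with
  | zero => simp
  | succ n ih =>
    have h : 2 * (n + 1) + 1 = (2 * n + 1) + 1 + 1 := by ring
    rw [h, Finset.sum_range_succ, Finset.sum_range_succ]
    have h2 : Even (p ^ (2 * n + 1) + p ^ (2 * n + 1 + 1)) := by
      have he : p ^ (2 * n + 1) + p ^ (2 * n + 1 + 1) = p ^ (2 * n + 1) * (1 + p) := by ring
      rw [he]
      rcases Nat.even_or_odd p with hp | hp
      · exact Even.mul_right (by simpa [pow_succ'] using hp.mul_right (p ^ (2 * n))) _
      · exact Even.mul_left (by simpa [Nat.add_comm] using hp.add_one) _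
    have h3 : (∑ k ∈ Finset.range (2 * n + 1), p ^ k) + p ^ (2 * n + 1) + p ^ (2 * n + 1 + 1)
        = (∑ k ∈ Finset.range (2 * n + 1), p ^ k) + (p ^ (2 * n + 1) + p ^ (2 * n + 1 + 1)) := by
      ring
    rw [h3]
    exact ih.add_even h2

theorem stmt_5 (F : ℕ) (hF : FriendOf10 F)
    (hsq : ∀ p : ℕ, p.Prime → Even (F.factorization p)) :
    729 * F > 625 * 9 ^ F.primeFactors.card := by
  obtain ⟨hpos, hne, heq⟩ := hF
  have hF0 : F ≠ 0 := hpos.ne'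
  -- σ(F) is odd
  have hsig : Odd (ArithmeticFunction.sigma 1 F) := by
    rw [ArithmeticFunction.sigma_one_apply, Nat.sum_divisors hF0]
    refine Finset.prod_induction _ Odd (fun a b ha hb => ha.mul hb) (by simp) ?_
    intro p hp
    obtain ⟨b, hb⟩ := hsq p (Nat.prime_of_mem_primeFactors hp)
    have : F.factorization p = 2 * b := by omega
    rw [this]
    exact odd_geom_aux p b
  -- F is odd
  have hFodd : Odd F := by
    rw [Nat.odd_iff] at hsig ⊢
    omega
  -- F ≥ 9^ω(F)
  have hFge : 9 ^ F.primeFactors.card ≤ F := by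
    have hfac : ∏ p ∈ F.primeFactors, p ^ F.factorization p = F := by
      rw [← Nat.support_factorization, ← Finsupp.prod]
      exact Nat.factorization_prod_pow_eq_self hF0
    calc 9 ^ F.primeFactors.card = ∏ _p ∈ F.primeFactors, 9 := by
          rw [Finset.prod_const]
      _ ≤ ∏ p ∈ F.primeFactors, p ^ F.factorization p := by
          apply Finset.prod_le_prod'
          intro p hp
          have hprime := Nat.prime_of_mem_primeFactors hp
          have hp3 : 3 ≤ p := by
            have hp2 : p ≠ 2 := by
              rintro rfl
              obtain ⟨k, hk⟩ := Nat.dvd_of_mem_primeFactors hp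
              rw [Nat.odd_iff] at hFodd
              omega
            have h2le := hprime.two_le
            omega
          have ha : 2 ≤ F.factorization p := by
            have hpos' : 0 < F.factorization p :=
              Nat.Prime.factorization_pos_of_dvd hprime hF0 (Nat.dvd_of_mem_primeFactors hp)
            obtain ⟨b, hb⟩ := hsq p hprime
            omega
          calc (9 : ℕ) = 3 ^ 2 := by norm_num
            _ ≤ p ^ 2 := Nat.pow_le_pow_left hp3 2
            _ ≤ p ^ F.factorization p := Nat.pow_le_pow_right (by omega) ha
      _ = F := hfac
  have h9 : 0 < 9 ^ F.primeFactors.card := Nat.pow_pos (by norm_num)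
  calc 625 * 9 ^ F.primeFactors.card < 729 * 9 ^ F.primeFactors.card := by
        exact Nat.mul_lt_mul_of_lt_of_le (by norm_num) (le_refl _) h9
    _ ≤ 729 * F := Nat.mul_le_mul_left _ hFge
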